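/- Let h₁, h₂ ∈ 𝔻ℍ be real dual quaternions with h₁² = h₂² = −1. The intersection of the left ideal 𝔻ℍ_ℂ·(i + h₁) with the right ideal (i − h₂)·𝔻ℍ_ℂ is a free 𝔻_ℂ-module of rank 1. -/

import Mathlib

/-- complexification of a real quaternion -/
noncomputable def quatC (q : Quaternion ℝ) : Quaternion ℂ :=
  ⟨(q.re : ℂ), (q.imI : ℂ), (q.imJ : ℂ), (q.imK : ℂ)⟩

/-- complexification `𝔻ℍ → 𝔻ℍ_ℂ` of a real dual quaternion -/
noncomputable def dualQuatC (d : DualNumber (Quaternion ℝ)) : DualNumber (Quaternion ℂ) :=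
  (quatC d.fst, quatC d.snd)

/-- embedding of the complex dual numbers `𝔻_ℂ = ℂ[ε]/(ε²)` into `𝔻ℍ_ℂ` (central scalars) -/
noncomputable def scalarDQ (c : DualNumber ℂ) : DualNumber (Quaternion ℂ) :=
  ((c.fst : Quaternion ℂ), (c.snd : Quaternion ℂ))

/-- the central complex unit `i` in `𝔻ℍ_ℂ` -/
noncomputable def iDQ : DualNumber (Quaternion ℂ) := ((Complex.I : Quaternion ℂ), 0)

set_option linter.unreachableTactic false
set_option linter.unusedTactic false
set_option maxHeartbeats 1600000

open Quaternion

@[simp] lemma quatC_re (q : Quaternion ℝ) : (quatC q).re = (q.re : ℂ) := rfl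
@[simp] lemma quatC_imI (q : Quaternion ℝ) : (quatC q).imI = (q.imI : ℂ) := rfl
@[simp] lemma quatC_imJ (q : Quaternion ℝ) : (quatC q).imJ = (q.imJ : ℂ) := rfl
@[simp] lemma quatC_imK (q : Quaternion ℝ) : (quatC q).imK = (q.imK : ℂ) := rfl
@[simp] lemma iDQ_fst : TrivSqZeroExt.fst iDQ = (Complex.I : Quaternion ℂ) := rfl
@[simp] lemma iDQ_snd : TrivSqZeroExt.snd iDQ = 0 := rfl
@[simp] lemma dualQuatC_fst (d : DualNumber (Quaternion ℝ)) :
    TrivSqZeroExt.fst (dualQuatC d) = quatC d.fst := rfl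
@[simp] lemma dualQuatC_snd (d : DualNumber (Quaternion ℝ)) :
    TrivSqZeroExt.snd (dualQuatC d) = quatC d.snd := rfl
@[simp] lemma scalarDQ_fst (c : DualNumber ℂ) :
    TrivSqZeroExt.fst (scalarDQ c) = (c.fst : Quaternion ℂ) := rfl
@[simp] lemma scalarDQ_snd (c : DualNumber ℂ) :
    TrivSqZeroExt.snd (scalarDQ c) = (c.snd : Quaternion ℂ) := rfl


/- ### auxiliary material -/

lemma quatC_mul (a b : Quaternion ℝ) : quatC (a*b) = quatC a * quatC b := by
  ext <;> simp only [Quaternion.re_mul, Quaternion.imI_mul, Quaternion.imJ_mul,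
    Quaternion.imK_mul] <;> simp [quatC] <;> push_cast <;> ring

lemma quatC_neg (a : Quaternion ℝ) : quatC (-a) = - quatC a := by ext <;> simp [quatC] <;> rfl

lemma quatC_add (a b : Quaternion ℝ) : quatC (a+b) = quatC a + quatC b := by ext <;> simp [quatC] <;> rfl

lemma quatC_neg_one : quatC (-1) = -1 := by ext <;> simp [quatC] <;> rfl

lemma quatC_zero : quatC 0 = 0 := by ext <;> simp [quatC] <;> rfl

noncomputable def IQ : Quaternion ℂ := ((Complex.I : ℂ) : Quaternion ℂ)
noncomputable def tQ : Quaternion ℂ := ((2*Complex.I : ℂ) : Quaternion ℂ)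

lemma tQ_ne : (2*Complex.I : ℂ) ≠ 0 := by simp [Complex.I_ne_zero]

lemma tQ_comm (w : Quaternion ℂ) : tQ * w = w * tQ := Quaternion.coe_commutes _ _

lemma coe_cancel_left (z : ℂ) (hz : z ≠ 0) (w : Quaternion ℂ)
    (h : (z : Quaternion ℂ) * w = 0) : w = 0 := by
  have := congrArg (fun v => ((z⁻¹ : ℂ) : Quaternion ℂ) * v) h
  simpa [← mul_assoc, ← Quaternion.coe_mul, inv_mul_cancel₀ hz] using this

lemma coe_cancel_right (z : ℂ) (hz : z ≠ 0) (w : Quaternion ℂ)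
    (h : w * (z : Quaternion ℂ) = 0) : w = 0 := by
  have := congrArg (fun v => v * ((z⁻¹ : ℂ) : Quaternion ℂ)) h
  simpa [mul_assoc, ← Quaternion.coe_mul, mul_inv_cancel₀ hz] using this

lemma IQ_sq : IQ * IQ = -1 := by rw [IQ, ← Quaternion.coe_mul, Complex.I_mul_I]; simp

lemma tQ_IQ : tQ * IQ = -2 := by
  rw [tQ, IQ, ← Quaternion.coe_mul, show (2*Complex.I*Complex.I : ℂ) = -2 by
    rw [mul_assoc, Complex.I_mul_I]; ring]
  simp
  norm_cast

lemma tQ_two (w : Quaternion ℂ) : tQ * w = IQ * w + IQ * w := by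
  rw [tQ, IQ, show (2*Complex.I : ℂ) = Complex.I + Complex.I by ring]
  push_cast [Quaternion.coe_add]
  rw [add_mul]

lemma sq_plus (v : Quaternion ℂ) (hv : v * v = -1) : (IQ + v) * (IQ + v) = tQ * (IQ + v) := by
  have hc : v * IQ = IQ * v := (Quaternion.coe_commutes _ _).symm
  rw [add_mul, mul_add, mul_add, hv, hc, mul_add, IQ_sq, tQ_IQ, tQ_two,
    show (-2 : Quaternion ℂ) = -1 + -1 by norm_num]
  abel

lemma sq_minus (v : Quaternion ℂ) (hv : v * v = -1) : (IQ - v) * (IQ - v) = tQ * (IQ - v) := by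
  have hc : v * IQ = IQ * v := (Quaternion.coe_commutes _ _).symm
  rw [sub_mul, mul_sub, mul_sub, hv, hc, mul_sub, IQ_sq, tQ_IQ, tQ_two,
    show (-2 : Quaternion ℂ) = -1 + -1 by norm_num]
  abel

lemma anti_plus (v w : Quaternion ℂ) (hvw : v * w + w * v = 0) :
    (IQ + v) * w + w * (IQ + v) = tQ * w := by
  have hc : w * IQ = IQ * w := (Quaternion.coe_commutes _ _).symm
  have h4 : v * w = -(w * v) := eq_neg_of_add_eq_zero_left hvw
  rw [add_mul, mul_add, hc, tQ_two, h4]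
  abel

lemma anti_minus (v w : Quaternion ℂ) (hvw : v * w + w * v = 0) :
    (IQ - v) * w + w * (IQ - v) = tQ * w := by
  have hc : w * IQ = IQ * w := (Quaternion.coe_commutes _ _).symm
  have h4 : v * w = -(w * v) := eq_neg_of_add_eq_zero_left hvw
  rw [sub_mul, mul_sub, hc, tQ_two, h4]
  abel

lemma re_eq_zero (p : Quaternion ℝ) (h : p * p = -1) : p.re = 0 := by
  by_contra hre
  have h1 := congrArg QuaternionAlgebra.imI h
  have h2 := congrArg QuaternionAlgebra.imJ h
  have h3 := congrArg QuaternionAlgebra.imK h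
  have h0 := congrArg QuaternionAlgebra.re h
  simp [Quaternion.re_mul, Quaternion.imI_mul, Quaternion.imJ_mul, Quaternion.imK_mul]
    at h0 h1 h2 h3
  have e1 : p.imI = 0 := by
    rcases mul_eq_zero.1 (show p.re * p.imI = 0 by linarith) with h | h
    · exact absurd h hre
    · exact h
  have e2 : p.imJ = 0 := by
    rcases mul_eq_zero.1 (show p.re * p.imJ = 0 by linarith) with h | h
    · exact absurd h hre
    · exact h
  have e3 : p.imK = 0 := by
    rcases mul_eq_zero.1 (show p.re * p.imK = 0 by linarith) with h | h
    · exact absurd h hre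
    · exact h
  rw [e1, e2, e3] at h0
  nlinarith

lemma star_plus (v : Quaternion ℝ) (hv : v.re = 0) :
    star (IQ + quatC v) = tQ - (IQ + quatC v) := by
  ext <;> simp [IQ, tQ, hv] <;> ring

lemma star_minus (v : Quaternion ℝ) (hv : v.re = 0) :
    star (IQ - quatC v) = tQ - (IQ - quatC v) := by
  ext <;> simp [IQ, tQ, hv] <;> ring

set_option maxHeartbeats 1000000 in
/-- two elements of the intersection corner are proportional -/
lemma prop_of (x y : Quaternion ℂ) (h1 : x * star y = 0) (h2 : star y * x = 0)
    (hy : y ≠ 0) : ∃ c : ℂ, x = (c : Quaternion ℂ) * y := by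
  have m1 := congrArg QuaternionAlgebra.imI h1
  have m2 := congrArg QuaternionAlgebra.imJ h1
  have m3 := congrArg QuaternionAlgebra.imK h1
  have n1 := congrArg QuaternionAlgebra.imI h2
  have n2 := congrArg QuaternionAlgebra.imJ h2
  have n3 := congrArg QuaternionAlgebra.imK h2
  simp [Quaternion.re_mul, Quaternion.imI_mul, Quaternion.imJ_mul, Quaternion.imK_mul]
    at m1 m2 m3 n1 n2 n3
  have d01 : x.re * y.imI = x.imI * y.re := by linear_combination (-1/2)*m1 + (-1/2)*n1
  have d23 : x.imJ * y.imK = x.imK * y.imJ := by linear_combination (-1/2)*m1 + (1/2)*n1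
  have d02 : x.re * y.imJ = x.imJ * y.re := by linear_combination (-1/2)*m2 + (-1/2)*n2
  have d13 : x.imI * y.imK = x.imK * y.imI := by linear_combination (1/2)*m2 + (-1/2)*n2
  have d03 : x.re * y.imK = x.imK * y.re := by linear_combination (-1/2)*m3 + (-1/2)*n3
  have d12 : x.imI * y.imJ = x.imJ * y.imI := by linear_combination (-1/2)*m3 + (1/2)*n3
  have solve : ∀ c : ℂ,
      x.re = c * y.re → x.imI = c * y.imI → x.imJ = c * y.imJ → x.imK = c * y.imK →
      x = (c : Quaternion ℂ) * y := by
    intro c e0 e1 e2 e3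
    ext <;> simp [Quaternion.re_mul, Quaternion.imI_mul, Quaternion.imJ_mul,
      Quaternion.imK_mul] <;> assumption
  by_cases h0 : y.re ≠ 0
  · exact ⟨x.re / y.re, by
      refine solve _ ?_ ?_ ?_ ?_ <;> field_simp <;>
        first | ring1 | linear_combination d01 | linear_combination -d01 |
          linear_combination d02 | linear_combination -d02 |
          linear_combination d03 | linear_combination -d03 |
          linear_combination d12 | linear_combination -d12 |
          linear_combination d13 | linear_combination -d13 |
          linear_combination d23 | linear_combination -d23⟩
  · push_neg at h0
    by_cases hi : y.imI ≠ 0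
    · exact ⟨x.imI / y.imI, by
        refine solve _ ?_ ?_ ?_ ?_ <;> field_simp <;>
          first | ring1 | linear_combination d01 | linear_combination -d01 |
            linear_combination d02 | linear_combination -d02 |
            linear_combination d03 | linear_combination -d03 |
            linear_combination d12 | linear_combination -d12 |
            linear_combination d13 | linear_combination -d13 |
            linear_combination d23 | linear_combination -d23⟩
    · push_neg at hi
      by_cases hj : y.imJ ≠ 0
      · exact ⟨x.imJ / y.imJ, by
          refine solve _ ?_ ?_ ?_ ?_ <;> field_simp <;>
            first | ring1 | linear_combination d01 | linear_combination -d01 |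
              linear_combination d02 | linear_combination -d02 |
              linear_combination d03 | linear_combination -d03 |
              linear_combination d12 | linear_combination -d12 |
              linear_combination d13 | linear_combination -d13 |
              linear_combination d23 | linear_combination -d23⟩
      · push_neg at hj
        have hk : y.imK ≠ 0 := by
          intro hk
          exact hy (by ext <;> simp [h0, hi, hj, hk])
        exact ⟨x.imK / y.imK, by
          refine solve _ ?_ ?_ ?_ ?_ <;> field_simp <;>
            first | ring1 | linear_combination d01 | linear_combination -d01 |
              linear_combination d02 | linear_combination -d02 |
              linear_combination d03 | linear_combination -d03 |
              linear_combination d12 | linear_combination -d12 |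
              linear_combination d13 | linear_combination -d13 |
              linear_combination d23 | linear_combination -d23⟩

lemma prop_of' (A B x y : Quaternion ℂ)
    (hA : star A = tQ - A) (hB : star B = tQ - B)
    (hx1 : x * A = tQ * x) (hx2 : B * x = tQ * x)
    (hy1 : y * A = tQ * y) (hy2 : B * y = tQ * y) :
    x * star y = 0 ∧ star y * x = 0 := by
  have hstt : star tQ = tQ := by
    rw [tQ]
    exact Quaternion.star_coe _
  have hAy : A * star y = 0 := by
    have e := congrArg star hy1
    rw [star_mul, star_mul, hA, hstt] at e
    rw [sub_mul] at e
    have hc : star y * tQ = tQ * star y := by rw [tQ]; exact (Quaternion.coe_commutes _ _).symm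
    rw [hc] at e
    exact sub_eq_self.mp e
  have hyB : star y * B = 0 := by
    have e := congrArg star hy2
    rw [star_mul, star_mul, hB, hstt] at e
    rw [mul_sub] at e
    have hc : star y * tQ = tQ * star y := by rw [tQ]; exact (Quaternion.coe_commutes _ _).symm
    rw [hc] at e
    exact sub_eq_self.mp e
  constructor
  · apply coe_cancel_left _ tQ_ne
    calc ((2*Complex.I : ℂ) : Quaternion ℂ) * (x * star y) = (tQ * x) * star y := by
          rw [tQ, mul_assoc]
        _ = (x * A) * star y := by rw [hx1]
        _ = x * (A * star y) := by rw [mul_assoc]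
        _ = 0 := by rw [hAy, mul_zero]
  · apply coe_cancel_left _ tQ_ne
    calc ((2*Complex.I : ℂ) : Quaternion ℂ) * (star y * x) = (tQ * star y) * x := by
          rw [tQ, mul_assoc]
        _ = (star y * tQ) * x := by rw [tQ, Quaternion.coe_commutes]
        _ = star y * (B * x) := by rw [mul_assoc, hx2]
        _ = 0 := by rw [← mul_assoc, hyB, zero_mul]

lemma exists_u (p q : Quaternion ℝ) (hp : p * p = -1) (hq : q * q = -1) :
    ∃ u : Quaternion ℂ, (IQ - quatC q) * u * (IQ + quatC p) ≠ 0 := by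
  classical
  have hrep := re_eq_zero p hp
  have hreq := re_eq_zero q hq
  by_cases hpq : p = q
  · subst hpq
    obtain ⟨r, hr0, hrp⟩ : ∃ r : Quaternion ℝ, r ≠ 0 ∧ r * p + p * r = 0 := by
      by_cases hij : p.imI = 0 ∧ p.imJ = 0
      · refine ⟨⟨0,1,0,0⟩, ?_, ?_⟩
        · intro h
          have := congrArg QuaternionAlgebra.imI h
          simp at this
        · ext <;>
            simp [Quaternion.re_mul, Quaternion.imI_mul, Quaternion.imJ_mul, Quaternion.imK_mul,
              hrep, hij.1, hij.2,
              Quaternion.re_mul (a := (⟨0,1,0,0⟩ : ℍ[ℝ])), Quaternion.re_mul (b := (⟨0,1,0,0⟩ : ℍ[ℝ])), Quaternion.imI_mul (a := (⟨0,1,0,0⟩ : ℍ[ℝ])), Quaternion.imI_mul (b := (⟨0,1,0,0⟩ : ℍ[ℝ])), Quaternion.imJ_mul (a := (⟨0,1,0,0⟩ : ℍ[ℝ])), Quaternion.imJ_mul (b := (⟨0,1,0,0⟩ : ℍ[ℝ])), Quaternion.imK_mul (a := (⟨0,1,0,0⟩ : ℍ[ℝ])), Quaternion.imK_mul (b :=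 (⟨0,1,0,0⟩ : ℍ[ℝ]))] <;> ring
      · refine ⟨⟨0, -p.imJ, p.imI, 0⟩, ?_, ?_⟩
        · intro h
          apply hij
          constructor
          · have := congrArg QuaternionAlgebra.imJ h; simpa using this
          · have := congrArg QuaternionAlgebra.imI h; simpa using this
        · ext <;>
            simp [Quaternion.re_mul, Quaternion.imI_mul, Quaternion.imJ_mul, Quaternion.imK_mul,
              hrep, Quaternion.re_mul (a := (⟨0, -p.imJ, p.imI, 0⟩ : ℍ[ℝ])), Quaternion.re_mul (b := (⟨0, -p.imJ, p.imI, 0⟩ : ℍ[ℝ])), Quaternion.imI_mul (a := (⟨0, -p.imJ, p.imI, 0⟩ : ℍ[ℝ])), Quaternion.imI_mul (b := (⟨0, -p.imJ, p.imI, 0⟩ : ℍ[ℝ])), Quaternion.imJ_mul (a := (⟨0, -p.imJ, p.imI, 0⟩ : ℍ[ℝ])), Quaternion.imJ_mul (b := (⟨0, -p.imJ, p.imI, 0⟩ : ℍ[ℝ])), Quaternion.imK_mul (a := (⟨0, -p.imJ, p.imI, 0⟩ : ℍ[ℝ])), Quaternion.imK_mul (b := (⟨0, -p.imJ, p.imI,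 0⟩ : ℍ[ℝ]))] <;> ring
    refine ⟨quatC r, ?_⟩
    intro h0
    have hpc2 : quatC p * quatC p = -1 := by rw [← quatC_mul, hp, quatC_neg_one]
    have hanti : quatC r * quatC p = -(quatC p * quatC r) := by
      rw [← quatC_mul, ← quatC_mul, ← quatC_neg]
      congr 1
      exact eq_neg_of_add_eq_zero_left hrp
    have hcc : quatC r * IQ = IQ * quatC r := by
      rw [IQ]; exact (Quaternion.coe_commutes _ _).symm
    have e1 : quatC r * (IQ + quatC p) = (IQ - quatC p) * quatC r := by
      rw [mul_add, sub_mul, hanti, hcc]; abel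
    rw [mul_assoc, e1, ← mul_assoc] at h0
    have hns : (Quaternion.normSq (quatC r) : ℂ) = ((Quaternion.normSq r : ℝ) : ℂ) := by
      simp [Quaternion.normSq_def']
      try push_cast
      try ring
    have hns0 : ((Quaternion.normSq r : ℝ) : ℂ) ≠ 0 := by
      simp only [ne_eq, Complex.ofReal_eq_zero]
      exact (Quaternion.normSq_ne_zero).mpr hr0
    have h0' : (IQ - quatC p) * (IQ - quatC p) = 0 := by
      apply coe_cancel_right _ hns0
      have := congrArg (fun v => v * star (quatC r)) h0
      simp only [zero_mul] at this
      rw [mul_assoc, Quaternion.self_mul_star, hns] at this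
      exact this
    rw [sq_minus _ hpc2] at h0'
    have h0'' : IQ - quatC p = 0 := by
      apply coe_cancel_left _ tQ_ne
      rw [← tQ]; exact h0'
    simpa [IQ, hrep, Complex.I_ne_zero] using congrArg QuaternionAlgebra.re h0''
  · refine ⟨1, ?_⟩
    intro h0
    rw [mul_one] at h0
    apply hpq
    have e1 := congrArg (fun v => (QuaternionAlgebra.imI v).im) h0
    have e2 := congrArg (fun v => (QuaternionAlgebra.imJ v).im) h0
    have e3 := congrArg (fun v => (QuaternionAlgebra.imK v).im) h0
    simp [Quaternion.imI_mul, Quaternion.imJ_mul, Quaternion.imK_mul, IQ,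
      hrep, hreq, Complex.add_im, Complex.sub_im, Complex.mul_im] at e1 e2 e3
    ext
    · rw [hrep, hreq]
    · linarith
    · linarith
    · linarith

lemma fst_pair (a b : Quaternion ℂ) :
    (TrivSqZeroExt.fst ((a, b) : DualNumber (Quaternion ℂ))) = a := rfl

lemma snd_pair (a b : Quaternion ℂ) :
    (TrivSqZeroExt.snd ((a, b) : DualNumber (Quaternion ℂ))) = b := rfl

lemma inl_central (z : ℂ) (w : DualNumber (Quaternion ℂ)) :
    (TrivSqZeroExt.inl ((z : Quaternion ℂ)) : DualNumber (Quaternion ℂ)) * w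
      = w * TrivSqZeroExt.inl ((z : Quaternion ℂ)) := by
  apply TrivSqZeroExt.ext
  · rw [TrivSqZeroExt.fst_mul, TrivSqZeroExt.fst_mul, TrivSqZeroExt.fst_inl]
    exact Quaternion.coe_commutes _ _
  · rw [TrivSqZeroExt.snd_mul, TrivSqZeroExt.snd_mul]
    simp only [TrivSqZeroExt.fst_inl, TrivSqZeroExt.snd_inl, smul_eq_mul,
      MulOpposite.smul_eq_mul_unop, MulOpposite.unop_op]
    rw [zero_mul, add_zero, mul_zero, zero_add]
    exact Quaternion.coe_commutes _ _

lemma scalarDQ_central (c : DualNumber ℂ) (w : DualNumber (Quaternion ℂ)) :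
    scalarDQ c * w = w * scalarDQ c := by
  apply TrivSqZeroExt.ext
  · simp [TrivSqZeroExt.fst_mul, fst_pair]
    exact Quaternion.coe_commutes _ _
  · simp [TrivSqZeroExt.snd_mul, fst_pair, snd_pair]
    rw [Quaternion.coe_commutes, add_comm, Quaternion.coe_commutes]

set_option maxHeartbeats 8000000 in

/-- For real dual quaternions `h₁, h₂` with `h₁² = h₂² = -1`, the
intersection of the left ideal `𝔻ℍ_ℂ·(i + h₁)` with the right ideal `(i - h₂)·𝔻ℍ_ℂ`
is a free `𝔻_ℂ`-module of rank 1. -/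
theorem stmt_7
    (h₁ h₂ : DualNumber (Quaternion ℝ))
    (hh₁ : h₁ * h₁ = -1) (hh₂ : h₂ * h₂ = -1) :
    ∃ b : DualNumber (Quaternion ℂ),
      (∀ x : DualNumber (Quaternion ℂ),
          ((∃ a, x = a * (iDQ + dualQuatC h₁)) ∧ (∃ a, x = (iDQ - dualQuatC h₂) * a)) ↔
            ∃ c : DualNumber ℂ, x = scalarDQ c * b) ∧
      (∀ c : DualNumber ℂ, scalarDQ c * b = 0 → c = 0) := by

  classical
  -- real facts
  have hp2 : h₁.fst * h₁.fst = -1 := by simpa using congrArg TrivSqZeroExt.fst hh₁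
  have hq2 : h₂.fst * h₂.fst = -1 := by simpa using congrArg TrivSqZeroExt.fst hh₂
  have hpanti : h₁.fst * h₁.snd + h₁.snd * h₁.fst = 0 := by
    simpa [TrivSqZeroExt.snd_mul] using congrArg TrivSqZeroExt.snd hh₁
  have hqanti : h₂.fst * h₂.snd + h₂.snd * h₂.fst = 0 := by
    simpa [TrivSqZeroExt.snd_mul] using congrArg TrivSqZeroExt.snd hh₂
  have hrep := re_eq_zero _ hp2
  have hreq := re_eq_zero _ hq2
  -- complexified quaternion-level objects
  set A : Quaternion ℂ := IQ + quatC h₁.fst with hA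
  set B : Quaternion ℂ := IQ - quatC h₂.fst with hB
  have hpc2 : quatC h₁.fst * quatC h₁.fst = -1 := by rw [← quatC_mul, hp2, quatC_neg_one]
  have hqc2 : quatC h₂.fst * quatC h₂.fst = -1 := by rw [← quatC_mul, hq2, quatC_neg_one]
  have hpantiC : quatC h₁.fst * quatC h₁.snd + quatC h₁.snd * quatC h₁.fst = 0 := by
    rw [← quatC_mul, ← quatC_mul, ← quatC_add, hpanti, quatC_zero]
  have hqantiC : quatC h₂.fst * quatC h₂.snd + quatC h₂.snd * quatC h₂.fst = 0 := by
    rw [← quatC_mul, ← quatC_mul, ← quatC_add, hqanti, quatC_zero]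
  have hAA : A * A = tQ * A := sq_plus _ hpc2
  have hBB : B * B = tQ * B := sq_minus _ hqc2
  have hApanti : A * quatC h₁.snd + quatC h₁.snd * A = tQ * quatC h₁.snd :=
    anti_plus _ _ hpantiC
  have hBqanti : B * (-quatC h₂.snd) + (-quatC h₂.snd) * B = tQ * (-quatC h₂.snd) := by
    have h' : quatC h₂.fst * (-quatC h₂.snd) + (-quatC h₂.snd) * quatC h₂.fst = 0 := by
      rw [mul_neg (quatC h₂.fst) (quatC h₂.snd), neg_mul (quatC h₂.snd) (quatC h₂.fst),
        ← neg_add, hqantiC, neg_zero]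
    exact anti_minus _ _ h'
  have hstA : star A = tQ - A := star_plus _ hrep
  have hstB : star B = tQ - B := star_minus _ hreq
  -- dual-level objects
  set T : DualNumber (Quaternion ℂ) := TrivSqZeroExt.inl tQ with hT
  set P : DualNumber (Quaternion ℂ) := iDQ + dualQuatC h₁ with hP
  set Q : DualNumber (Quaternion ℂ) := iDQ - dualQuatC h₂ with hQ
  have hPf : P.fst = A := by simp [hP, hA, IQ, fst_pair]
  have hPs : P.snd = quatC h₁.snd := by simp [hP, snd_pair]
  have hQf : Q.fst = B := by simp [hQ, hB, IQ, fst_pair]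
  have hQs : Q.snd = -quatC h₂.snd := by simp [hQ, snd_pair]
  have hTf : T.fst = tQ := by simp [hT]
  have hTs : T.snd = 0 := by simp [hT]
  have hTc : ∀ z : DualNumber (Quaternion ℂ), T * z = z * T := by
    intro z
    apply TrivSqZeroExt.ext
    · simp [TrivSqZeroExt.fst_mul, hTf]
      exact tQ_comm _
    · simp [TrivSqZeroExt.snd_mul, hTf, hTs]
      exact tQ_comm _
  have hPP : P * P = T * P := by
    apply TrivSqZeroExt.ext
    · simp [TrivSqZeroExt.fst_mul, hPf, hTf, hAA]
    · simp [TrivSqZeroExt.snd_mul, hPf, hPs, hTf, hTs]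
      exact hApanti
  have hQQ : Q * Q = T * Q := by
    apply TrivSqZeroExt.ext
    · simp [TrivSqZeroExt.fst_mul, hQf, hTf, hBB]
    · simp [TrivSqZeroExt.snd_mul, hQf, hQs, hTf, hTs]
      exact ((congrArg (B * -quatC h₂.snd + ·) (neg_mul (quatC h₂.snd) B)).symm).trans hBqanti
  -- the scalar inverse of T
  set S : DualNumber (Quaternion ℂ) := TrivSqZeroExt.inl ((-Complex.I/2 : ℂ) : Quaternion ℂ)
    with hS
  have hSc : ∀ z : DualNumber (Quaternion ℂ), S * z = z * S := fun z => inl_central _ z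
  have hST : S * T = 1 := by
    apply TrivSqZeroExt.ext
    · rw [TrivSqZeroExt.fst_mul, TrivSqZeroExt.fst_one, hTf, hS, TrivSqZeroExt.fst_inl,
        tQ, ← Quaternion.coe_mul,
        show ((-Complex.I/2) * (2*Complex.I) : ℂ) = 1 from by
          linear_combination -Complex.I_mul_I]
      norm_cast
    · rw [TrivSqZeroExt.snd_mul, TrivSqZeroExt.snd_one, hS]
      simp [hTs, hTf]
  -- membership criteria
  have memL : ∀ x : DualNumber (Quaternion ℂ), (∃ a, x = a * P) ↔ x * P = T * x := by
    intro x
    constructor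
    · rintro ⟨a, rfl⟩
      calc (a * P) * P = a * (P * P) := by rw [mul_assoc]
        _ = a * (T * P) := by rw [hPP]
        _ = (a * T) * P := by rw [mul_assoc]
        _ = (T * a) * P := by rw [hTc]
        _ = T * (a * P) := by rw [mul_assoc]
    · intro h
      refine ⟨S * x, ?_⟩
      calc x = (S * T) * x := by rw [hST, one_mul]
        _ = S * (T * x) := by rw [mul_assoc]
        _ = S * (x * P) := by rw [h]
        _ = (S * x) * P := by rw [mul_assoc]
  have memR : ∀ x : DualNumber (Quaternion ℂ), (∃ a, x = Q * a) ↔ Q * x = T * x := by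
    intro x
    constructor
    · rintro ⟨a, rfl⟩
      calc Q * (Q * a) = (Q * Q) * a := by rw [mul_assoc]
        _ = (T * Q) * a := by rw [hQQ]
        _ = T * (Q * a) := by rw [mul_assoc]
    · intro h
      refine ⟨S * x, ?_⟩
      calc x = (S * T) * x := by rw [hST, one_mul]
        _ = S * (T * x) := by rw [mul_assoc]
        _ = S * (Q * x) := by rw [h]
        _ = (S * Q) * x := by rw [mul_assoc]
        _ = (Q * S) * x := by rw [hSc]
        _ = Q * (S * x) := by rw [mul_assoc]
  -- the generator
  obtain ⟨u, hu⟩ := exists_u h₁.fst h₂.fst hp2 hq2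
  rw [← hA, ← hB] at hu
  set U : DualNumber (Quaternion ℂ) := TrivSqZeroExt.inl u with hU
  set bb : DualNumber (Quaternion ℂ) := Q * U * P with hbb
  have hbf : bb.fst = B * u * A := by
    simp [hbb, TrivSqZeroExt.fst_mul, hQf, hPf, hU]
  have hbP : bb * P = T * bb := by
    calc bb * P = (Q * U) * (P * P) := by rw [hbb, mul_assoc (Q * U)]
      _ = (Q * U) * (T * P) := by rw [hPP]
      _ = ((Q * U) * T) * P := by rw [← mul_assoc]
      _ = (T * (Q * U)) * P := by rw [hTc]
      _ = T * bb := by rw [hbb]; simp only [mul_assoc]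
  have hQb : Q * bb = T * bb := by
    calc Q * bb = ((Q * Q) * U) * P := by rw [hbb, ← mul_assoc, ← mul_assoc]
      _ = ((T * Q) * U) * P := by rw [hQQ]
      _ = T * bb := by rw [hbb]; simp only [mul_assoc]
  -- quaternion-level conditions satisfied by bb.fst
  have hyA : (B * u * A) * A = tQ * (B * u * A) := by
    calc (B * u * A) * A = (B * u) * (A * A) := by rw [mul_assoc (B * u)]
      _ = (B * u) * (tQ * A) := by rw [hAA]
      _ = ((B * u) * tQ) * A := by rw [← mul_assoc]
      _ = (tQ * (B * u)) * A := by rw [tQ_comm]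
      _ = tQ * (B * u * A) := by simp only [mul_assoc]
  have hyB : B * (B * u * A) = tQ * (B * u * A) := by
    calc B * (B * u * A) = ((B * B) * u) * A := by rw [← mul_assoc, ← mul_assoc]
      _ = ((tQ * B) * u) * A := by rw [hBB]
      _ = tQ * (B * u * A) := by simp only [mul_assoc]
  refine ⟨bb, ?_, ?_⟩
  · intro x
    constructor
    · rintro ⟨hL, hR⟩
      have hxP : x * P = T * x := (memL x).mp hL
      have hQx : Q * x = T * x := (memR x).mp hR
      have hx0A : x.fst * A = tQ * x.fst := by
        simpa [TrivSqZeroExt.fst_mul, hPf, hTf] using congrArg TrivSqZeroExt.fst hxP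
      have hx0B : B * x.fst = tQ * x.fst := by
        simpa [TrivSqZeroExt.fst_mul, hQf, hTf] using congrArg TrivSqZeroExt.fst hQx
      obtain ⟨hs1, hs2⟩ := prop_of' A B x.fst (B * u * A) hstA hstB hx0A hx0B hyA hyB
      obtain ⟨c₀, hc₀⟩ := prop_of x.fst (B * u * A) hs1 hs2 hu
      set s : DualNumber (Quaternion ℂ) := scalarDQ ((c₀, 0) : DualNumber ℂ) with hs
      set x' : DualNumber (Quaternion ℂ) := x - s * bb with hx'
      have hsbbP : (s * bb) * P = T * (s * bb) := by
        calc (s * bb) * P = s * (bb * P) := by rw [mul_assoc]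
          _ = s * (T * bb) := by rw [hbP]
          _ = (s * T) * bb := by rw [mul_assoc]
          _ = (T * s) * bb := by exact congrArg (· * bb) (scalarDQ_central _ _)
          _ = T * (s * bb) := by rw [mul_assoc]
      have hQsbb : Q * (s * bb) = T * (s * bb) := by
        calc Q * (s * bb) = (Q * s) * bb := by rw [mul_assoc]
          _ = (s * Q) * bb := by exact congrArg (· * bb) (scalarDQ_central _ _).symm
          _ = s * (Q * bb) := by rw [mul_assoc]
          _ = s * (T * bb) := by rw [hQb]
          _ = (s * T) * bb := by rw [mul_assoc]
          _ = (T * s) * bb := by exact congrArg (· * bb) (scalarDQ_central _ _)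
          _ = T * (s * bb) := by rw [mul_assoc]
      have hx'P : x' * P = T * x' := by
        rw [hx', sub_mul, mul_sub, hxP, hsbbP]
      have hQx' : Q * x' = T * x' := by
        rw [hx', mul_sub, mul_sub, hQx, hQsbb]
      have hsf : s.fst = (c₀ : Quaternion ℂ) := rfl
      have hss : s.snd = 0 := by show ((0:ℂ) : Quaternion ℂ) = 0; simp
      have hx'f : x'.fst = 0 := by
        rw [hx', TrivSqZeroExt.fst_sub, TrivSqZeroExt.fst_mul, hsf, hbf, ← hc₀, sub_self]
      have hx1A : x'.snd * A = tQ * x'.snd := by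
        have h := congrArg TrivSqZeroExt.snd hx'P
        simpa [TrivSqZeroExt.snd_mul, hx'f, hPf, hTf, hTs] using h
      have hx1B : B * x'.snd = tQ * x'.snd := by
        have h := congrArg TrivSqZeroExt.snd hQx'
        simpa [TrivSqZeroExt.snd_mul, hx'f, hQf, hTf, hTs] using h
      obtain ⟨hs1', hs2'⟩ := prop_of' A B x'.snd (B * u * A) hstA hstB hx1A hx1B hyA hyB
      obtain ⟨c₁, hc₁⟩ := prop_of x'.snd (B * u * A) hs1' hs2' hu
      refine ⟨(c₀, c₁), ?_⟩
      have hxsplit : x = x' + s * bb := by rw [hx', sub_add_cancel]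
      have e1 : (scalarDQ ((c₀, c₁) : DualNumber ℂ)).fst = ((c₀ : ℂ) : Quaternion ℂ) := rfl
      have e2 : (scalarDQ ((c₀, c₁) : DualNumber ℂ)).snd = ((c₁ : ℂ) : Quaternion ℂ) := rfl
      apply TrivSqZeroExt.ext
      · simp only [TrivSqZeroExt.fst_mul, e1]
        rw [hbf, hc₀]
      · rw [hxsplit]
        simp only [TrivSqZeroExt.snd_add, TrivSqZeroExt.snd_mul, smul_eq_mul,
          MulOpposite.smul_eq_mul_unop, MulOpposite.unop_op, e1, e2, hsf, hss, hbf, hc₁,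
          zero_mul, add_zero]
        rw [add_comm]
    · rintro ⟨c, rfl⟩
      constructor
      · apply (memL _).mpr
        calc (scalarDQ c * bb) * P = scalarDQ c * (bb * P) := by rw [mul_assoc]
          _ = scalarDQ c * (T * bb) := by rw [hbP]
          _ = (scalarDQ c * T) * bb := by rw [mul_assoc]
          _ = (T * scalarDQ c) * bb := by rw [scalarDQ_central]
          _ = T * (scalarDQ c * bb) := by rw [mul_assoc]
      · apply (memR _).mpr
        calc Q * (scalarDQ c * bb) = (Q * scalarDQ c) * bb := by rw [mul_assoc]
          _ = (scalarDQ c * Q) * bb := by rw [scalarDQ_central]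
          _ = scalarDQ c * (Q * bb) := by rw [mul_assoc]
          _ = scalarDQ c * (T * bb) := by rw [hQb]
          _ = (scalarDQ c * T) * bb := by rw [mul_assoc]
          _ = (T * scalarDQ c) * bb := by rw [scalarDQ_central]
          _ = T * (scalarDQ c * bb) := by rw [mul_assoc]
  · intro c hc
    have hf := congrArg TrivSqZeroExt.fst hc
    have hsn := congrArg TrivSqZeroExt.snd hc
    simp [TrivSqZeroExt.fst_mul, TrivSqZeroExt.snd_mul, fst_pair, snd_pair, hbf]
      at hf hsn
    have hc1 : c.fst = 0 := by
      by_contra hne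
      exact hu (coe_cancel_left _ hne _ hf)
    rw [hc1] at hsn
    simp at hsn
    have hc2 : c.snd = 0 := by
      by_contra hne
      exact hu (coe_cancel_left _ hne _ hsn)
    apply TrivSqZeroExt.ext
    · simpa using hc1
    · simpa using hc2
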